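/- For the BD.I case with n = 5, the Hamiltonian H = Σ_{k=1}^5 p_k^2 + 4(Σ_{k=1}^5 q_k^2)^2 - 2(2q1q5 - 2q2q4 + q3^2)^2 Poisson-commutes with each of the four linear functions r1 = (q1p2-p1q2)+(q4p5-p4q5), r2 = (q2p3-p2q3)+(q3p4-p3q4), r3 = (q1p3-p1q3)+(q5p3-p5q3), r4 = (q1p4-p1q4)+(q2p5-p2q5). -/

import Mathlib

set_option maxHeartbeats 4000000

/-- Canonical Poisson bracket of two functions on `T*ℝⁿ ≅ (Fin n → ℝ) × (Fin n → ℝ)`,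
`{f,g} = ∑ i, (∂f/∂qᵢ ∂g/∂pᵢ - ∂f/∂pᵢ ∂g/∂qᵢ)`. -/
noncomputable def pb {n : ℕ} (f g : (Fin n → ℝ) × (Fin n → ℝ) → ℝ) :
    (Fin n → ℝ) × (Fin n → ℝ) → ℝ := fun x =>
  ∑ i : Fin n,
    (deriv (fun t => f (Function.update x.1 i t, x.2)) (x.1 i) *
       deriv (fun t => g (x.1, Function.update x.2 i t)) (x.2 i) -
     deriv (fun t => f (x.1, Function.update x.2 i t)) (x.2 i) *
       deriv (fun t => g (Function.update x.1 i t, x.2)) (x.1 i))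

lemma deriv_hmul (c t : ℝ) : deriv (HMul.hMul c) t = c := by
  simpa using ((hasDerivAt_id t).const_mul c).deriv

theorem stmt11 :
    pb (n := 5) (fun x => x.2 0^2 + x.2 1^2 + x.2 2^2 + x.2 3^2 + x.2 4^2 + 4*(x.1 0^2 + x.1 1^2 + x.1 2^2 + x.1 3^2 + x.1 4^2)^2 - 2*(2*x.1 0*x.1 4 - 2*x.1 1*x.1 3 + x.1 2^2)^2) (fun x => (x.1 0*x.2 1 - x.2 0*x.1 1) + (x.1 3*x.2 4 - x.2 3*x.1 4)) = 0 ∧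
    pb (n := 5) (fun x => x.2 0^2 + x.2 1^2 + x.2 2^2 + x.2 3^2 + x.2 4^2 + 4*(x.1 0^2 + x.1 1^2 + x.1 2^2 + x.1 3^2 + x.1 4^2)^2 - 2*(2*x.1 0*x.1 4 - 2*x.1 1*x.1 3 + x.1 2^2)^2) (fun x => (x.1 1*x.2 2 - x.2 1*x.1 2) + (x.1 2*x.2 3 - x.2 2*x.1 3)) = 0 ∧
    pb (n := 5) (fun x => x.2 0^2 + x.2 1^2 + x.2 2^2 + x.2 3^2 + x.2 4^2 + 4*(x.1 0^2 + x.1 1^2 + x.1 2^2 + x.1 3^2 + x.1 4^2)^2 - 2*(2*x.1 0*x.1 4 - 2*x.1 1*x.1 3 + x.1 2^2)^2) (fun x => (x.1 0*x.2 2 - x.2 0*x.1 2) + (x.1 4*x.2 2 - x.2 4*x.1 2)) = 0 ∧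
    pb (n := 5) (fun x => x.2 0^2 + x.2 1^2 + x.2 2^2 + x.2 3^2 + x.2 4^2 + 4*(x.1 0^2 + x.1 1^2 + x.1 2^2 + x.1 3^2 + x.1 4^2)^2 - 2*(2*x.1 0*x.1 4 - 2*x.1 1*x.1 3 + x.1 2^2)^2) (fun x => (x.1 0*x.2 3 - x.2 0*x.1 3) + (x.1 1*x.2 4 - x.2 1*x.1 4)) = 0 := by
  refine ⟨?_, ?_, ?_, ?_⟩ <;>
  · funext x
    simp only [pb, Fin.sum_univ_five, Function.update_apply, Pi.zero_apply,
      show ((0:Fin 5) = 1) = False from by decide, show ((0:Fin 5) = 2) = False from by decide,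
      show ((0:Fin 5) = 3) = False from by decide, show ((0:Fin 5) = 4) = False from by decide,
      show ((1:Fin 5) = 0) = False from by decide, show ((1:Fin 5) = 2) = False from by decide,
      show ((1:Fin 5) = 3) = False from by decide, show ((1:Fin 5) = 4) = False from by decide,
      show ((2:Fin 5) = 0) = False from by decide, show ((2:Fin 5) = 1) = False from by decide,
      show ((2:Fin 5) = 3) = False from by decide, show ((2:Fin 5) = 4) = False from by decide,
      show ((3:Fin 5) = 0) = False from by decide, show ((3:Fin 5) = 1) = False from by decide,
      show ((3:Fin 5) = 2) = False from by decide, show ((3:Fin 5) = 4) = False from by decide,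
      show ((4:Fin 5) = 0) = False from by decide, show ((4:Fin 5) = 1) = False from by decide,
      show ((4:Fin 5) = 2) = False from by decide, show ((4:Fin 5) = 3) = False from by decide,
      if_true, if_false, eq_self_iff_true, if_pos, ite_true, ite_false]
    simp (disch := fun_prop) only [deriv_fun_add, deriv_fun_sub, deriv_fun_mul, deriv_fun_pow,
      deriv_const_mul, deriv_id'', deriv_const', deriv_hmul,
      differentiableAt_const, differentiableAt_fun_id]
    ring
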